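/- Let σ be a weight on ℝ^d, Q₀ a dyadic cube, and 𝒮 a sparse collection of dyadic cubes all contained in Q₀. Then Σ_{S∈𝒮} σ(S) ≤ 2 ∫_{Q₀} M(σ 1_{Q₀})(x) dx. More generally, for every Q ∈ 𝒮, Σ_{S∈𝒮, S⊆Q} σ(S) ≤ 2 ∫_{Q} M(σ 1_{Q})(x) dx. -/

import Mathlib

open MeasureTheory Set ENNReal

noncomputable section

/-- A (half-open, axis-parallel) cube in `ℝ^d`, with corner `c` and side length `l > 0`. -/
def IsCube {d : ℕ} (Q : Set (EuclideanSpace ℝ (Fin d))) : Prop :=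
  ∃ (c : Fin d → ℝ) (l : ℝ), 0 < l ∧ Q = {x | ∀ i, c i ≤ x i ∧ x i < c i + l}

/-- A dyadic cube `∏_i [n_i 2^k, (n_i+1) 2^k)` in `ℝ^d`. -/
def IsDyadicCube {d : ℕ} (Q : Set (EuclideanSpace ℝ (Fin d))) : Prop :=
  ∃ (k : ℤ) (n : Fin d → ℤ),
    Q = {x | ∀ i, (n i : ℝ) * 2 ^ k ≤ x i ∧ x i < ((n i : ℝ) + 1) * 2 ^ k}

/-- A weight: a nonnegative locally integrable function on `ℝ^d`. -/
def IsWeight {d : ℕ} (σ : EuclideanSpace ℝ (Fin d) → ℝ) : Prop :=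
  (∀ x, 0 ≤ σ x) ∧ LocallyIntegrable σ volume

/-- `σ(Q) = ∫_Q σ dx`, as an extended nonnegative real. -/
def wt {d : ℕ} (σ : EuclideanSpace ℝ (Fin d) → ℝ) (Q : Set (EuclideanSpace ℝ (Fin d))) : ℝ≥0∞ :=
  ∫⁻ x in Q, ENNReal.ofReal (σ x)

/-- The average `⟨σ⟩_Q = σ(Q)/|Q|`. -/
def avg {d : ℕ} (σ : EuclideanSpace ℝ (Fin d) → ℝ) (Q : Set (EuclideanSpace ℝ (Fin d))) : ℝ≥0∞ :=
  wt σ Q / volume Q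

/-- The Hardy–Littlewood maximal function `M f (x) = sup_{Q ∋ x} ⟨|f|⟩_Q`, sup over cubes. -/
def maximal {d : ℕ} (f : EuclideanSpace ℝ (Fin d) → ℝ) (x : EuclideanSpace ℝ (Fin d)) : ℝ≥0∞ :=
  ⨆ (Q : Set (EuclideanSpace ℝ (Fin d))) (_ : IsCube Q) (_ : x ∈ Q),
    (∫⁻ y in Q, (‖f y‖₊ : ℝ≥0∞)) / volume Q

/-- `ρ_σ(Q) = (∫_Q M(σ 1_Q) dx) / σ(Q)`. -/
def rho {d : ℕ} (σ : EuclideanSpace ℝ (Fin d) → ℝ) (Q : Set (EuclideanSpace ℝ (Fin d))) : ℝ≥0∞ :=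
  (∫⁻ x in Q, maximal (Q.indicator σ) x) / wt σ Q

/-- `ρ_{σ,ε}(Q) = ρ_σ(Q) · ε(ρ_σ(Q))`. -/
def rhoE {d : ℕ} (σ : EuclideanSpace ℝ (Fin d) → ℝ) (ε : ℝ → ℝ)
    (Q : Set (EuclideanSpace ℝ (Fin d))) : ℝ≥0∞ :=
  rho σ Q * ENNReal.ofReal (ε (rho σ Q).toReal)

/-- The measure `w dx`. -/
def wMeasure {d : ℕ} (w : EuclideanSpace ℝ (Fin d) → ℝ) : Measure (EuclideanSpace ℝ (Fin d)) :=
  volume.withDensity fun x => ENNReal.ofReal (w x)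

/-- A sparse collection of dyadic cubes: for each `Q` in the collection, the union of the
members strictly contained in `Q` has measure at most `|Q|/2`. -/
def IsSparse {d : ℕ} (𝒮 : Set (Set (EuclideanSpace ℝ (Fin d)))) : Prop :=
  (∀ Q ∈ 𝒮, IsDyadicCube Q) ∧
    ∀ Q ∈ 𝒮, volume (⋃₀ {Q' | Q' ∈ 𝒮 ∧ Q' ⊂ Q}) ≤ volume Q / 2



lemma measurableSet_box {d : ℕ} (a b : Fin d → ℝ) :
    MeasurableSet {x : EuclideanSpace ℝ (Fin d) | ∀ i, a i ≤ x i ∧ x i < b i} := by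
  have : {x : EuclideanSpace ℝ (Fin d) | ∀ i, a i ≤ x i ∧ x i < b i}
      = ⋂ i, (fun x : EuclideanSpace ℝ (Fin d) => x i) ⁻¹' Set.Ico (a i) (b i) := by
    ext x; simp [Set.mem_Ico]
  rw [this]
  exact MeasurableSet.iInter fun i =>
    ((EuclideanSpace.proj i).continuous.measurable) measurableSet_Ico

lemma volume_box {d : ℕ} (a b : Fin d → ℝ) :
    volume {x : EuclideanSpace ℝ (Fin d) | ∀ i, a i ≤ x i ∧ x i < b i}
      = ∏ i, ENNReal.ofReal (b i - a i) := by
  have hmp := EuclideanSpace.volume_preserving_symm_measurableEquiv_toLp (Fin d)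
  have hs : MeasurableSet (Set.univ.pi fun i => Set.Ico (a i) (b i)) :=
    MeasurableSet.univ_pi fun i => measurableSet_Ico
  have hpre : (MeasurableEquiv.toLp 2 (Fin d → ℝ)).symm ⁻¹'
        (Set.univ.pi fun i => Set.Ico (a i) (b i))
      = {x : EuclideanSpace ℝ (Fin d) | ∀ i, a i ≤ x i ∧ x i < b i} := by
    ext x; simp [Set.mem_pi, Set.mem_Ico]
  rw [← hpre, hmp.measure_preimage hs.nullMeasurableSet, volume_pi_pi]
  simp [Real.volume_Ico]

lemma IsDyadicCube.measurableSet {d : ℕ} {Q : Set (EuclideanSpace ℝ (Fin d))}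
    (h : IsDyadicCube Q) : MeasurableSet Q := by
  obtain ⟨k, n, rfl⟩ := h
  exact measurableSet_box _ _

lemma IsDyadicCube.isCube {d : ℕ} {Q : Set (EuclideanSpace ℝ (Fin d))}
    (h : IsDyadicCube Q) : IsCube Q := by
  obtain ⟨k, n, rfl⟩ := h
  refine ⟨fun i => (n i : ℝ) * 2 ^ k, 2 ^ k, zpow_pos (by norm_num) _, ?_⟩
  have e : ∀ i, ((n i : ℝ) + 1) * 2 ^ k = (n i : ℝ) * 2 ^ k + 2 ^ k := fun i => by ring
  ext x
  simp only [Set.mem_setOf_eq]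
  exact forall_congr' fun i => by rw [e i]

lemma IsDyadicCube.volume_ne {d : ℕ} {Q : Set (EuclideanSpace ℝ (Fin d))}
    (h : IsDyadicCube Q) : volume Q ≠ 0 ∧ volume Q ≠ ⊤ := by
  obtain ⟨k, n, rfl⟩ := h
  rw [volume_box (fun i => (n i : ℝ) * 2 ^ k) (fun i => ((n i : ℝ) + 1) * 2 ^ k)]
  have e : ∀ i ∈ Finset.univ,
      ENNReal.ofReal (((n i : ℝ) + 1) * 2 ^ k - (n i : ℝ) * 2 ^ k)
        = ENNReal.ofReal ((2:ℝ) ^ k) := fun i _ => by ring_nf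
  rw [Finset.prod_congr rfl e, Finset.prod_const]
  have hpos : (0:ℝ) < 2 ^ k := zpow_pos (by norm_num) _
  have h0 : ENNReal.ofReal ((2:ℝ) ^ k) ≠ 0 := by
    simp [ENNReal.ofReal_eq_zero, not_le, hpos]
  exact ⟨pow_ne_zero _ h0, ENNReal.pow_ne_top ENNReal.ofReal_ne_top⟩

lemma dyadic_Ico_subset (k₁ k₂ n₁ n₂ : ℤ) (hk : k₁ ≤ k₂) (x : ℝ)
    (h₁ : (n₁:ℝ) * 2 ^ k₁ ≤ x ∧ x < ((n₁:ℝ)+1) * 2 ^ k₁)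
    (h₂ : (n₂:ℝ) * 2 ^ k₂ ≤ x ∧ x < ((n₂:ℝ)+1) * 2 ^ k₂) :
    ∀ y : ℝ, (n₁:ℝ) * 2 ^ k₁ ≤ y ∧ y < ((n₁:ℝ)+1) * 2 ^ k₁ →
      (n₂:ℝ) * 2 ^ k₂ ≤ y ∧ y < ((n₂:ℝ)+1) * 2 ^ k₂ := by
  have htpos : (0:ℝ) < 2 ^ k₁ := zpow_pos (by norm_num) _
  set m := (k₂ - k₁).toNat with hmdef
  have hm : (m : ℤ) = k₂ - k₁ := Int.toNat_of_nonneg (sub_nonneg.2 hk)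
  have h2 : (2:ℝ) ^ k₂ = ((2^m : ℤ):ℝ) * 2 ^ k₁ := by
    push_cast
    rw [← zpow_natCast (2:ℝ) m, ← zpow_add₀ (two_ne_zero)]
    congr 1; omega
  have e₂l : (n₂:ℝ) * 2 ^ k₂ = ((n₂ * 2^m : ℤ):ℝ) * 2 ^ k₁ := by rw [h2]; push_cast; ring
  have e₂r : ((n₂:ℝ)+1) * 2 ^ k₂ = (((n₂+1) * 2^m : ℤ):ℝ) * 2 ^ k₁ := by rw [h2]; push_cast; ring
  rw [e₂l] at h₂ ⊢
  rw [e₂r] at h₂ ⊢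
  have hp : (↑(n₂ * 2^m) : ℝ) < (n₁:ℝ) + 1 := by
    have := lt_of_le_of_lt h₂.1 h₁.2
    exact lt_of_mul_lt_mul_right this htpos.le
  have hq : (n₁:ℝ) < (((n₂+1) * 2^m : ℤ):ℝ) := by
    have := lt_of_le_of_lt h₁.1 h₂.2
    exact lt_of_mul_lt_mul_right this htpos.le
  have hp' : (n₂ * 2^m : ℤ) ≤ n₁ := Int.lt_add_one_iff.mp (by exact_mod_cast hp)
  have hq' : (n₁ + 1 : ℤ) ≤ (n₂+1) * 2^m := Int.add_one_le_iff.mpr (by exact_mod_cast hq)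
  intro y hy
  constructor
  · calc (↑(n₂ * 2^m) : ℝ) * 2 ^ k₁ ≤ (n₁:ℝ) * 2 ^ k₁ :=
          mul_le_mul_of_nonneg_right (by exact_mod_cast hp') htpos.le
      _ ≤ y := hy.1
  · calc y < ((n₁:ℝ)+1) * 2 ^ k₁ := hy.2
      _ ≤ (((n₂+1) * 2^m : ℤ):ℝ) * 2 ^ k₁ :=
          mul_le_mul_of_nonneg_right (by exact_mod_cast hq') htpos.le

lemma dyadic_subset_of_le {d : ℕ} {Q₁ Q₂ : Set (EuclideanSpace ℝ (Fin d))}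
    (k₁ k₂ : ℤ) (n₁ n₂ : Fin d → ℤ) (hk : k₁ ≤ k₂)
    (hQ₁ : Q₁ = {x : EuclideanSpace ℝ (Fin d) |
      ∀ i, (n₁ i : ℝ) * 2 ^ k₁ ≤ x i ∧ x i < ((n₁ i : ℝ) + 1) * 2 ^ k₁})
    (hQ₂ : Q₂ = {x : EuclideanSpace ℝ (Fin d) |
      ∀ i, (n₂ i : ℝ) * 2 ^ k₂ ≤ x i ∧ x i < ((n₂ i : ℝ) + 1) * 2 ^ k₂})
    (hnd : ¬ Disjoint Q₁ Q₂) : Q₁ ⊆ Q₂ := by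
  rw [Set.not_disjoint_iff] at hnd
  obtain ⟨x, hx₁, hx₂⟩ := hnd
  rw [hQ₁] at hx₁; rw [hQ₂] at hx₂
  rw [hQ₁, hQ₂]
  intro y hy i
  exact dyadic_Ico_subset k₁ k₂ (n₁ i) (n₂ i) hk (x i) (hx₁ i) (hx₂ i) (y i) (hy i)

lemma dyadic_trichotomy {d : ℕ} {Q₁ Q₂ : Set (EuclideanSpace ℝ (Fin d))}
    (h₁ : IsDyadicCube Q₁) (h₂ : IsDyadicCube Q₂) :
    Q₁ ⊆ Q₂ ∨ Q₂ ⊆ Q₁ ∨ Disjoint Q₁ Q₂ := by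
  obtain ⟨k₁, n₁, e₁⟩ := h₁
  obtain ⟨k₂, n₂, e₂⟩ := h₂
  by_cases hd : Disjoint Q₁ Q₂
  · exact Or.inr (Or.inr hd)
  rcases le_total k₁ k₂ with hk | hk
  · exact Or.inl (dyadic_subset_of_le k₁ k₂ n₁ n₂ hk e₁ e₂ hd)
  · exact Or.inr (Or.inl (dyadic_subset_of_le k₂ k₁ n₂ n₁ hk e₂ e₁ fun h => hd h.symm))

lemma dyadic_countable (d : ℕ) :
    Set.Countable {Q : Set (EuclideanSpace ℝ (Fin d)) | IsDyadicCube Q} := by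
  have : {Q : Set (EuclideanSpace ℝ (Fin d)) | IsDyadicCube Q} ⊆
      Set.range (fun p : ℤ × (Fin d → ℤ) => {x : EuclideanSpace ℝ (Fin d) |
        ∀ i, (p.2 i : ℝ) * 2 ^ p.1 ≤ x i ∧ x i < ((p.2 i : ℝ) + 1) * 2 ^ p.1}) := by
    rintro Q ⟨k, n, rfl⟩; exact ⟨(k, n), rfl⟩
  exact (Set.countable_range _).mono this

lemma avg_le_maximal {d : ℕ} (σ : EuclideanSpace ℝ (Fin d) → ℝ) (hσ : ∀ x, 0 ≤ σ x)
    {Q S : Set (EuclideanSpace ℝ (Fin d))} (hS : IsCube S) (hSm : MeasurableSet S)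
    (hSQ : S ⊆ Q) {x : EuclideanSpace ℝ (Fin d)} (hx : x ∈ S) :
    wt σ S / volume S ≤ maximal (Q.indicator σ) x := by
  have hwt : wt σ S = ∫⁻ y in S, (‖Q.indicator σ y‖₊ : ℝ≥0∞) := by
    refine setLIntegral_congr_fun hSm (fun y hy => ?_)
    rw [Set.indicator_of_mem (hSQ hy)]
    exact (Real.enorm_eq_ofReal (hσ y)).symm
  rw [hwt]
  unfold maximal
  exact le_iSup_of_le S (le_iSup_of_le hS (le_iSup_of_le hx le_rfl))

lemma key_carleson {d : ℕ} (σ : EuclideanSpace ℝ (Fin d) → ℝ) (hσ : ∀ x, 0 ≤ σ x)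
    (𝒮 : Set (Set (EuclideanSpace ℝ (Fin d)))) (h𝒮 : IsSparse 𝒮)
    (Q : Set (EuclideanSpace ℝ (Fin d)))
    (𝒯 : Set (Set (EuclideanSpace ℝ (Fin d)))) (h𝒯 : 𝒯 ⊆ 𝒮)
    (hsub : ∀ S ∈ 𝒯, S ⊆ Q) :
    (∑' S : 𝒯, wt σ (S : Set (EuclideanSpace ℝ (Fin d)))) ≤
      2 * ∫⁻ x in Q, maximal (Q.indicator σ) x := by
  obtain ⟨hdy, hsp⟩ := h𝒮
  have hTdy : ∀ S ∈ 𝒯, IsDyadicCube S := fun S hS => hdy S (h𝒯 hS)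
  have hcount : 𝒯.Countable := (dyadic_countable d).mono hTdy
  haveI : Countable ↥𝒯 := hcount.to_subtype
  set U : Set (EuclideanSpace ℝ (Fin d)) → Set (EuclideanSpace ℝ (Fin d)) :=
    fun S => ⋃₀ {Q' | Q' ∈ 𝒮 ∧ Q' ⊂ S} with hU
  set E : ↥𝒯 → Set (EuclideanSpace ℝ (Fin d)) := fun S => ↑S \ U ↑S with hE
  have hUm : ∀ S : Set (EuclideanSpace ℝ (Fin d)), MeasurableSet (U S) := by
    intro S
    refine MeasurableSet.sUnion ?_ fun t ht => (hdy t ht.1).measurableSet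
    exact ((dyadic_countable d).mono (fun t ht => hdy t ht.1))
  have hEm : ∀ S : ↥𝒯, MeasurableSet (E S) :=
    fun S => ((hTdy _ S.2).measurableSet).diff (hUm _)
  have hES : ∀ S : ↥𝒯, E S ⊆ (S : Set (EuclideanSpace ℝ (Fin d))) := fun S => diff_subset
  -- volume lower bound
  have hEvol : ∀ S : ↥𝒯, volume (S : Set (EuclideanSpace ℝ (Fin d))) / 2 ≤ volume (E S) := by
    intro S
    have hvne := (hTdy _ S.2).volume_ne
    have hcover : (S : Set (EuclideanSpace ℝ (Fin d))) ⊆ E S ∪ U ↑S := by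
      intro x hx
      by_cases h : x ∈ U (S : Set (EuclideanSpace ℝ (Fin d)))
      · exact Or.inr h
      · exact Or.inl ⟨hx, h⟩
    have h1 : volume (S : Set (EuclideanSpace ℝ (Fin d)))
        ≤ volume (E S) + volume (S : Set (EuclideanSpace ℝ (Fin d))) / 2 :=
      le_trans (le_trans (measure_mono hcover) (measure_union_le _ _))
        (add_le_add_right (hsp _ (h𝒯 S.2)) _)
    have h2ne : volume (S : Set (EuclideanSpace ℝ (Fin d))) / 2 ≠ ⊤ :=
      (ENNReal.div_lt_top hvne.2 (by norm_num)).ne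
    have h1' : volume (S : Set (EuclideanSpace ℝ (Fin d))) / 2
          + volume (S : Set (EuclideanSpace ℝ (Fin d))) / 2
        ≤ volume (E S) + volume (S : Set (EuclideanSpace ℝ (Fin d))) / 2 := by
      rw [ENNReal.add_halves]; exact h1
    exact (ENNReal.add_le_add_iff_right h2ne).mp h1'
  -- pairwise disjoint
  have hdisj : Pairwise (Function.onFun Disjoint E) := by
    intro S T hST
    show Disjoint (E S) (E T)
    have hne : (S : Set (EuclideanSpace ℝ (Fin d))) ≠ ↑T := fun h => hST (Subtype.ext h)
    rcases dyadic_trichotomy (hTdy _ S.2) (hTdy _ T.2) with h | h | h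
    · have hss : (S : Set (EuclideanSpace ℝ (Fin d))) ⊂ ↑T := ssubset_of_subset_of_ne h hne
      have hSU : (S : Set (EuclideanSpace ℝ (Fin d))) ⊆ U ↑T :=
        Set.subset_sUnion_of_mem ⟨h𝒯 S.2, hss⟩
      rw [Set.disjoint_left]
      intro x hxS hxT
      exact hxT.2 (hSU (hES S hxS))
    · have hss : (T : Set (EuclideanSpace ℝ (Fin d))) ⊂ ↑S := ssubset_of_subset_of_ne h hne.symm
      have hTU : (T : Set (EuclideanSpace ℝ (Fin d))) ⊆ U ↑S :=
        Set.subset_sUnion_of_mem ⟨h𝒯 T.2, hss⟩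
      rw [Set.disjoint_right]
      intro x hxT hxS
      exact hxS.2 (hTU (hES T hxT))
    · exact h.mono (hES S) (hES T)
  -- pointwise bound integrated
  have hmain : ∀ S : ↥𝒯,
      wt σ (S : Set (EuclideanSpace ℝ (Fin d)))
        ≤ 2 * ∫⁻ x in E S, maximal (Q.indicator σ) x := by
    intro S
    have hvne := (hTdy _ S.2).volume_ne
    set vS := volume (S : Set (EuclideanSpace ℝ (Fin d)))
    set a := wt σ (S : Set (EuclideanSpace ℝ (Fin d)))
    have hub : a / vS * volume (E S) ≤ ∫⁻ x in E S, maximal (Q.indicator σ) x := by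
      rw [← setLIntegral_const]
      refine setLIntegral_mono' (hEm S) fun x hx => ?_
      exact avg_le_maximal σ hσ (hTdy _ S.2).isCube (hTdy _ S.2).measurableSet
        (hsub _ S.2) (hES S hx)
    have h1 : a / vS * (vS / 2) ≤ ∫⁻ x in E S, maximal (Q.indicator σ) x :=
      le_trans (mul_le_mul_right (hEvol S) _) hub
    have h2 : a / vS * (vS / 2) = a / 2 := by
      rw [← mul_div_assoc, ENNReal.div_mul_cancel hvne.1 hvne.2]
    rw [h2] at h1
    calc a = 2 * (a / 2) := (ENNReal.mul_div_cancel (by norm_num) (by norm_num)).symm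
      _ ≤ 2 * ∫⁻ x in E S, maximal (Q.indicator σ) x := mul_le_mul_right h1 2
  calc (∑' S : ↥𝒯, wt σ (S : Set (EuclideanSpace ℝ (Fin d))))
      ≤ ∑' S : ↥𝒯, 2 * ∫⁻ x in E S, maximal (Q.indicator σ) x :=
        ENNReal.tsum_le_tsum hmain
    _ = 2 * ∑' S : ↥𝒯, ∫⁻ x in E S, maximal (Q.indicator σ) x := ENNReal.tsum_mul_left
    _ = 2 * ∫⁻ x in ⋃ S : ↥𝒯, E S, maximal (Q.indicator σ) x := by
        rw [lintegral_iUnion hEm hdisj]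
    _ ≤ 2 * ∫⁻ x in Q, maximal (Q.indicator σ) x := by
        refine mul_le_mul_right (lintegral_mono_set ?_) 2
        exact Set.iUnion_subset fun S => (hES S).trans (hsub _ S.2)


/-- **Theorem (Carleson property of sparse collections).**
If `𝒮` is a sparse collection of dyadic cubes contained in a dyadic cube `Q₀`, then
`Σ_{S ∈ 𝒮} σ(S) ≤ 2 ∫_{Q₀} M(σ 1_{Q₀}) dx`, and more generally, for every `Q ∈ 𝒮`,
`Σ_{S ∈ 𝒮, S ⊆ Q} σ(S) ≤ 2 ∫_Q M(σ 1_Q) dx`. -/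
theorem sparse_carleson_maximal (d : ℕ) (σ : EuclideanSpace ℝ (Fin d) → ℝ)
    (hσ : IsWeight σ) (Q₀ : Set (EuclideanSpace ℝ (Fin d))) (hQ₀ : IsDyadicCube Q₀)
    (𝒮 : Set (Set (EuclideanSpace ℝ (Fin d)))) (h𝒮 : IsSparse 𝒮)
    (hsub : ∀ S ∈ 𝒮, S ⊆ Q₀) :
    (∑' S : 𝒮, wt σ (S : Set (EuclideanSpace ℝ (Fin d)))) ≤
        2 * ∫⁻ x in Q₀, maximal (Q₀.indicator σ) x ∧
      ∀ Q ∈ 𝒮,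
        (∑' S : {S | S ∈ 𝒮 ∧ S ⊆ Q}, wt σ (S : Set (EuclideanSpace ℝ (Fin d)))) ≤
          2 * ∫⁻ x in Q, maximal (Q.indicator σ) x := by
  constructor
  · exact key_carleson σ hσ.1 𝒮 h𝒮 Q₀ 𝒮 (fun _ h => h) hsub
  · intro Q hQ
    exact key_carleson σ hσ.1 𝒮 h𝒮 Q {S | S ∈ 𝒮 ∧ S ⊆ Q} (fun _ h => h.1) (fun _ h => h.2)
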